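/- Assume f is (L₁,L₂,L₃)-Lipschitz on D_M, i.e. |f(x,u₂,v₂,w₂) − f(x,u₁,v₁,w₁)| ≤ L₁|u₂−u₁| + L₂|v₂−v₁| + L₃|w₂−w₁| on D_M. Let φ₁, φ₂ ∈ C(Ω̄) with ‖φ₁‖ ≤ M and ‖φ₂‖ ≤ M, and for i = 1, 2 let uᵢ be a classical solution of Δ³uᵢ = φᵢ in Ω with uᵢ = Δuᵢ = Δ²uᵢ = 0 on Γ. Then max_{x∈Ω̄} |f(x,u₂,Δu₂,Δ²u₂) − f(x,u₁,Δu₁,Δ²u₁)| ≤ q·‖φ₂ − φ₁‖, where q = (C_Ω²L₁ + C_ΩL₂ + L₃)·C_Ω. -/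

import Mathlib

open scoped BigOperators

/-- The Laplace operator on `ℝⁿ` (realized as `EuclideanSpace ℝ (Fin n)`):
`Δ f x = ∑ i ∂²f/∂xᵢ² (x)`. -/
noncomputable def lap {n : ℕ} (f : EuclideanSpace ℝ (Fin n) → ℝ)
    (x : EuclideanSpace ℝ (Fin n)) : ℝ :=
  ∑ i : Fin n, fderiv ℝ (fun y => fderiv ℝ f y (EuclideanSpace.single i 1)) x
    (EuclideanSpace.single i 1)

/-- `max_{x ∈ S} |y x|` (as a supremum). -/
noncomputable def supNorm {α : Type*} (S : Set α) (y : α → ℝ) : ℝ :=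
  sSup ((fun x => |y x|) '' S)

/-- `u` is a classical solution of the triharmonic problem `Δ³u = φ` in `Ω`,
`u = Δu = Δ²u = 0` on `Γ = ∂Ω`, with `u`, `Δu`, `Δ²u` continuous on `Ω̄`. -/
def IsClassicalTriharm {n : ℕ} (Ω : Set (EuclideanSpace ℝ (Fin n)))
    (u φ : EuclideanSpace ℝ (Fin n) → ℝ) : Prop :=
  ContinuousOn u (closure Ω) ∧ ContinuousOn (lap u) (closure Ω) ∧
  ContinuousOn (lap (lap u)) (closure Ω) ∧
  ContDiffOn ℝ 2 u Ω ∧ ContDiffOn ℝ 2 (lap u) Ω ∧ ContDiffOn ℝ 2 (lap (lap u)) Ω ∧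
  (∀ x ∈ Ω, lap (lap (lap u)) x = φ x) ∧
  (∀ x ∈ frontier Ω, u x = 0 ∧ lap u x = 0 ∧ lap (lap u) x = 0)

/-- `u` is a (classical) solution of problem (P):
`Δ³u = f(x, u, Δu, Δ²u)` in `Ω`, `u = Δu = Δ²u = 0` on `Γ = ∂Ω`. -/
def IsSolP {n : ℕ} (Ω : Set (EuclideanSpace ℝ (Fin n)))
    (f : EuclideanSpace ℝ (Fin n) → ℝ → ℝ → ℝ → ℝ)
    (u : EuclideanSpace ℝ (Fin n) → ℝ) : Prop :=
  IsClassicalTriharm Ω u (fun x => f x (u x) (lap u x) (lap (lap u) x))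

/-- `w` is a classical solution of the Poisson problem `Δw = φ` in `Ω`, `w = 0` on `∂Ω`. -/
def IsPoissonSol {n : ℕ} (Ω : Set (EuclideanSpace ℝ (Fin n)))
    (w φ : EuclideanSpace ℝ (Fin n) → ℝ) : Prop :=
  ContinuousOn w (closure Ω) ∧ ContDiffOn ℝ 2 w Ω ∧
  (∀ x ∈ Ω, lap w x = φ x) ∧ (∀ x ∈ frontier Ω, w x = 0)

open scoped RealInnerProductSpace

/-- 1D second derivative test: at an interior local minimum the second derivative is ≥ 0. -/
lemma sdtest_aux {g g' : ℝ → ℝ} {a : ℝ}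
    (hg : ∀ᶠ t in nhds (0:ℝ), HasDerivAt g (g' t) t)
    (hg' : HasDerivAt g' a 0)
    (hmin : IsLocalMin g 0) : 0 ≤ a := by
  by_contra hcon
  push_neg at hcon
  have h0 : g' 0 = 0 := hmin.hasDerivAt_eq_zero hg.self_of_nhds
  have hs : Filter.Tendsto (slope g' 0) (nhdsWithin 0 {(0:ℝ)}ᶜ) (nhds a) :=
    hasDerivAt_iff_tendsto_slope.1 hg'
  have hs' : Filter.Tendsto (slope g' 0) (nhdsWithin 0 (Set.Ioi 0)) (nhds a) :=
    hs.mono_left (nhdsWithin_mono _ (fun t ht => ne_of_gt ht))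
  have h1 : ∀ᶠ t in nhdsWithin 0 (Set.Ioi (0:ℝ)), slope g' 0 t < 0 :=
    hs'.eventually_lt_const hcon
  have h1' : ∀ᶠ t in nhds (0:ℝ), t ∈ Set.Ioi (0:ℝ) → slope g' 0 t < 0 :=
    eventually_nhdsWithin_iff.mp h1
  have hall : ∀ᶠ t in nhds (0:ℝ),
      (HasDerivAt g (g' t) t ∧ g 0 ≤ g t) ∧ (t ∈ Set.Ioi (0:ℝ) → slope g' 0 t < 0) :=
    (hg.and hmin).and h1'
  rw [Metric.eventually_nhds_iff] at hall
  obtain ⟨ε, hε, hb⟩ := hall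
  have key : ∀ t ∈ Set.Icc (0:ℝ) (ε/2),
      HasDerivAt g (g' t) t ∧ g 0 ≤ g t ∧ (0 < t → g' t < 0) := by
    intro t ht
    have hd : dist t 0 < ε := by
      rw [Real.dist_eq, sub_zero, abs_of_nonneg ht.1]; linarith [ht.2]
    obtain ⟨⟨hD, hM⟩, hS⟩ := hb hd
    refine ⟨hD, hM, fun htpos => ?_⟩
    have := hS htpos
    rw [slope_def_field, h0] at this
    have h2 : g' t / t < 0 := by simpa using this
    rcases div_neg_iff.mp h2 with ⟨h3, h4⟩ | ⟨h3, h4⟩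
    · exact absurd htpos (not_lt.mpr (le_of_lt h4))
    · exact h3
  -- g is strictly antitone on [0, ε/2]
  have hanti : StrictAntiOn g (Set.Icc (0:ℝ) (ε/2)) := by
    apply strictAntiOn_of_deriv_neg (convex_Icc _ _)
    · intro t ht
      exact ((key t ht).1).continuousAt.continuousWithinAt
    · intro t ht
      rw [interior_Icc] at ht
      have h := key t ⟨le_of_lt ht.1, le_of_lt ht.2⟩
      rw [h.1.deriv]
      exact h.2.2 ht.1
  have h02 : (0:ℝ) < ε/2 := by linarith
  have hlt : g (ε/2) < g 0 :=
    hanti ⟨le_rfl, le_of_lt h02⟩ ⟨le_of_lt h02, le_rfl⟩ h02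
  have hge : g 0 ≤ g (ε/2) := (key (ε/2) ⟨le_of_lt h02, le_rfl⟩).2.1
  linarith

section Aux
variable {n : ℕ}
local notation "E" => EuclideanSpace ℝ (Fin n)

lemma fderiv_apply_diffAt_aux {f : E → ℝ} {U : Set E} (hU : IsOpen U)
    (hf : ContDiffOn ℝ 2 f U) {x : E} (hx : x ∈ U) (e : E) :
    DifferentiableAt ℝ (fun y => fderiv ℝ f y e) x := by
  have h1 : ContDiffAt ℝ 2 f x := hf.contDiffAt (hU.mem_nhds hx)
  have h2 : ContDiffAt ℝ 1 (fderiv ℝ f) x := h1.fderiv_right (by norm_num)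
  have h3 : DifferentiableAt ℝ (fderiv ℝ f) x := h2.differentiableAt one_ne_zero
  exact (ContinuousLinearMap.apply ℝ ℝ e).differentiableAt.comp x h3

lemma lap_nonneg_of_isLocalMin_aux {U : Set E} (hU : IsOpen U) {v : E → ℝ}
    (hv : ContDiffOn ℝ 2 v U) {x₀ : E} (hx₀ : x₀ ∈ U) (hmin : IsLocalMin v x₀) :
    0 ≤ lap v x₀ := by
  apply Finset.sum_nonneg
  intro i _
  set e : E := EuclideanSpace.single i (1:ℝ) with he
  set ℓ : ℝ → E := fun s => x₀ + s • e with hℓ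
  have hline : ∀ t : ℝ, HasDerivAt ℓ e t := by
    intro t
    simpa [hℓ] using ((hasDerivAt_id t).smul_const e).const_add x₀
  have hℓ0 : ℓ 0 = x₀ := by simp [hℓ]
  have hcont : Continuous ℓ := by
    exact continuous_const.add (continuous_id.smul continuous_const)
  have htend : Filter.Tendsto ℓ (nhds 0) (nhds x₀) := by
    rw [← hℓ0]; exact hcont.continuousAt
  have hUev : ∀ᶠ t in nhds (0:ℝ), ℓ t ∈ U := htend.eventually (hU.eventually_mem hx₀)
  set g : ℝ → ℝ := fun t => v (ℓ t) with hgdef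
  set g' : ℝ → ℝ := fun t => fderiv ℝ v (ℓ t) e with hg'def
  have hg : ∀ᶠ t in nhds (0:ℝ), HasDerivAt g (g' t) t := by
    filter_upwards [hUev] with t ht
    have hd : DifferentiableAt ℝ v (ℓ t) :=
      (hv.differentiableOn (by norm_num)).differentiableAt (hU.mem_nhds ht)
    exact hd.hasFDerivAt.comp_hasDerivAt t (hline t)
  have hF : DifferentiableAt ℝ (fun y => fderiv ℝ v y e) x₀ :=
    fderiv_apply_diffAt_aux hU hv hx₀ e
  have hg' : HasDerivAt g' (fderiv ℝ (fun y => fderiv ℝ v y e) x₀ e) 0 := by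
    have hF2 := hF.hasFDerivAt
    rw [← hℓ0] at hF2
    have h := hF2.comp_hasDerivAt 0 (hline 0)
    rw [hℓ0] at h
    exact h
  have hmin' : IsLocalMin g 0 := by
    have := htend.eventually hmin
    filter_upwards [this] with t ht
    simpa [hgdef, hℓ0] using ht
  exact sdtest_aux hg hg' hmin'

end Aux

section Aux2
variable {n : ℕ}
local notation "E" => EuclideanSpace ℝ (Fin n)

lemma lap_sub_aux {U : Set E} (hU : IsOpen U) {f g : E → ℝ}
    (hf : ContDiffOn ℝ 2 f U) (hg : ContDiffOn ℝ 2 g U) {x : E} (hx : x ∈ U) :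
    lap (fun y => f y - g y) x = lap f x - lap g x := by
  unfold lap
  rw [← Finset.sum_sub_distrib]
  apply Finset.sum_congr rfl
  intro i _
  set e : E := EuclideanSpace.single i (1:ℝ)
  have hev : (fun y => fderiv ℝ (fun z => f z - g z) y e)
      =ᶠ[nhds x] fun y => fderiv ℝ f y e - fderiv ℝ g y e := by
    filter_upwards [hU.mem_nhds hx] with y hy
    have hdf : DifferentiableAt ℝ f y :=
      (hf.differentiableOn (by norm_num)).differentiableAt (hU.mem_nhds hy)
    have hdg : DifferentiableAt ℝ g y :=
      (hg.differentiableOn (by norm_num)).differentiableAt (hU.mem_nhds hy)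
    rw [fderiv_fun_sub hdf hdg]
    simp
  rw [hev.fderiv_eq, fderiv_fun_sub (fderiv_apply_diffAt_aux hU hf hx e)
    (fderiv_apply_diffAt_aux hU hg hx e)]
  simp

lemma lap_combo_aux {U : Set E} (hU : IsOpen U) {B : E → ℝ}
    (hB : ContDiffOn ℝ 2 B U) {x : E} (hx : x ∈ U) (α β s : ℝ) (c : E) :
    lap (fun y => α + β * ‖y - c‖^2 + s * B y) x = β * (2 * n) + s * lap B x := by
  have hq : ∀ y : E, HasFDerivAt (fun z : E => ‖z - c‖^2)
      ((2:ℝ) • (innerSL ℝ (y - c))) y := by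
    intro y
    have h1 : HasFDerivAt (fun z : E => z - c) (ContinuousLinearMap.id ℝ E) y :=
      (hasFDerivAt_id y).sub_const c
    have h2 := h1.inner ℝ h1
    have hfun : (fun z : E => (inner ℝ (z - c) (z - c) : ℝ)) = fun z : E => ‖z - c‖^2 :=
      funext fun z => real_inner_self_eq_norm_sq _
    rw [hfun] at h2
    refine h2.congr_fderiv (Eq.symm ?_)
    ext v
    simp only [ContinuousLinearMap.smul_apply, innerSL_apply_apply, smul_eq_mul,
      ContinuousLinearMap.comp_apply, ContinuousLinearMap.prod_apply,
      ContinuousLinearMap.coe_id', id_eq, fderivInnerCLM_apply]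
    rw [real_inner_comm v (y - c)]
    ring
  unfold lap
  have key : ∀ i : Fin n,
      fderiv ℝ (fun y => fderiv ℝ (fun z => α + β * ‖z - c‖^2 + s * B z) y
        (EuclideanSpace.single i 1)) x (EuclideanSpace.single i 1)
      = 2 * β + s * fderiv ℝ (fun y => fderiv ℝ B y (EuclideanSpace.single i 1)) x
        (EuclideanSpace.single i 1) := by
    intro i
    set e : E := EuclideanSpace.single i (1:ℝ) with he
    have hev : (fun y => fderiv ℝ (fun z => α + β * ‖z - c‖^2 + s * B z) y e)
        =ᶠ[nhds x] fun y => β * (2 * (y i - c i)) + s * fderiv ℝ B y e := by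
      filter_upwards [hU.mem_nhds hx] with y hy
      have hdB : DifferentiableAt ℝ B y :=
        (hB.differentiableOn (by norm_num)).differentiableAt (hU.mem_nhds hy)
      have hfd : HasFDerivAt (fun z => α + β * ‖z - c‖^2 + s * B z)
          ((β • ((2:ℝ) • (innerSL ℝ (y - c)))) + (s • fderiv ℝ B y)) y :=
        (((hq y).const_mul β).const_add α).add (hdB.hasFDerivAt.const_mul s)
      rw [hfd.fderiv]
      have hin : (innerSL ℝ (y - c)) e = y i - c i := by
        rw [innerSL_apply_apply, he]
        have := EuclideanSpace.inner_single_right (𝕜 := ℝ) i (1:ℝ) (y - c)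
        simpa using this
      simp only [ContinuousLinearMap.add_apply, ContinuousLinearMap.smul_apply,
        smul_eq_mul, hin]
    rw [hev.fderiv_eq]
    have hA : HasFDerivAt (fun y : E => β * (2 * (y i - c i)))
        ((2 * β) • (EuclideanSpace.proj i : E →L[ℝ] ℝ)) x := by
      have hp := (EuclideanSpace.proj (𝕜 := ℝ) i :
        E →L[ℝ] ℝ).hasFDerivAt (x := x)
      have heq2 : (fun y : E => β * (2 * (y i - c i)))
          = fun y : E => (2 * β) * ((EuclideanSpace.proj i : E →L[ℝ] ℝ) y)
            - (2 * β) * c i := by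
        funext y
        simp only [EuclideanSpace.proj]
        simp [PiLp.proj_apply]
        ring
      rw [heq2]
      exact (hp.const_mul (2 * β)).sub_const _
    have hF : DifferentiableAt ℝ (fun y => fderiv ℝ B y e) x :=
      fderiv_apply_diffAt_aux hU hB hx e
    have hsum := hA.fun_add (hF.hasFDerivAt.const_mul s)
    rw [hsum.fderiv]
    have hpe : (EuclideanSpace.proj i : E →L[ℝ] ℝ) e = 1 := by
      simp [he, PiLp.proj_apply, EuclideanSpace.single_apply]
    simp only [ContinuousLinearMap.add_apply, ContinuousLinearMap.smul_apply,
      smul_eq_mul, hpe]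
    ring
  simp only [key]
  rw [Finset.sum_add_distrib, Finset.sum_const, ← Finset.mul_sum,
    Finset.card_univ, Fintype.card_fin, nsmul_eq_mul]
  ring

end Aux2

section Poisson
variable {n : ℕ}
local notation "E" => EuclideanSpace ℝ (Fin n)

lemma poisson_bound_aux (hn : 1 ≤ n) {Ω : Set E} (hΩ : IsOpen Ω) (hne : Ω.Nonempty)
    {R : ℝ} {c : E} (hball : Ω ⊆ Metric.closedBall c R)
    {w : E → ℝ} (hwc : ContinuousOn w (closure Ω)) (hwd : ContDiffOn ℝ 2 w Ω)
    (hwb : ∀ x ∈ frontier Ω, w x = 0)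
    {N : ℝ} (hN : 0 ≤ N) (hlapw : ∀ x ∈ Ω, |lap w x| ≤ N) :
    ∀ x ∈ closure Ω, |w x| ≤ R^2/(2*n) * N := by
  have h2n : (0:ℝ) < 2*n := by
    have h : (1:ℝ) ≤ n := by exact_mod_cast hn
    linarith
  have hsubset : closure Ω ⊆ Metric.closedBall c R :=
    closure_minimal hball Metric.isClosed_closedBall
  have hcompact : IsCompact (closure Ω) :=
    (isCompact_closedBall c R).of_isClosed_subset isClosed_closure hsubset
  have key : ∀ s : ℝ, |s| = 1 → ∀ ε : ℝ, 0 < ε → ∀ x ∈ closure Ω,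
      0 ≤ ((N+ε)*R^2/(2*n)) + (-(N+ε)/(2*n)) * ‖x - c‖^2 + s * w x := by
    intro s hs ε hε
    set α : ℝ := (N+ε)*R^2/(2*n) with hα
    set β : ℝ := -(N+ε)/(2*n) with hβ
    set v : E → ℝ := fun y => α + β * ‖y - c‖^2 + s * w y with hv
    have hvc : ContinuousOn v (closure Ω) := by
      refine ContinuousOn.add (ContinuousOn.add continuousOn_const ?_) ?_
      · exact continuousOn_const.mul
          (((continuous_id.sub continuous_const).norm.pow 2).continuousOn)
      · exact continuousOn_const.mul hwc
    have hvd : ContDiffOn ℝ 2 v Ω := by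
      refine ContDiffOn.add (ContDiffOn.add contDiffOn_const ?_) ?_
      · exact contDiffOn_const.mul (((contDiff_id.sub contDiff_const).norm_sq ℝ).contDiffOn)
      · exact contDiffOn_const.mul hwd
    obtain ⟨x₀, hx₀mem, hx₀min⟩ :=
      hcompact.exists_isMinOn (hne.mono subset_closure) hvc
    have hminle : ∀ y ∈ closure Ω, v x₀ ≤ v y := fun y hy => hx₀min hy
    by_cases hx₀Ω : x₀ ∈ Ω
    · exfalso
      have hloc : IsLocalMin v x₀ :=
        Filter.eventually_of_mem (hΩ.mem_nhds hx₀Ω)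
          fun y hy => hminle y (subset_closure hy)
      have h0 := lap_nonneg_of_isLocalMin_aux hΩ hvd hx₀Ω hloc
      have hlapv : lap v x₀ = β * (2*n) + s * lap w x₀ :=
        lap_combo_aux hΩ hwd hx₀Ω α β s c
      have h1 : β * (2*(n:ℝ)) = -(N+ε) := by
        rw [hβ]; field_simp
      have h2 : s * lap w x₀ ≤ N := by
        calc s * lap w x₀ ≤ |s * lap w x₀| := le_abs_self _
          _ = |s| * |lap w x₀| := abs_mul _ _
          _ = |lap w x₀| := by rw [hs, one_mul]
          _ ≤ N := hlapw x₀ hx₀Ω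
      rw [hlapv, h1] at h0
      linarith
    · have hfront : x₀ ∈ frontier Ω := by
        rw [frontier, hΩ.interior_eq]
        exact ⟨hx₀mem, hx₀Ω⟩
      have hw0 := hwb x₀ hfront
      have hq : ‖x₀ - c‖^2 ≤ R^2 := by
        have hmem := hsubset hx₀mem
        rw [Metric.mem_closedBall, dist_eq_norm] at hmem
        nlinarith [norm_nonneg (x₀ - c)]
      have hv0 : 0 ≤ v x₀ := by
        have heq : v x₀ = (N+ε)*(R^2 - ‖x₀-c‖^2)/(2*n) := by
          rw [hv]; simp only [hw0, mul_zero, add_zero, hα, hβ]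
          field_simp
          ring
        rw [heq]
        apply div_nonneg (mul_nonneg (by linarith) (by linarith)) (le_of_lt h2n)
      exact fun x hx => le_trans hv0 (hminle x hx)
  intro x hx
  have hbound : ∀ s : ℝ, |s| = 1 → -(R^2/(2*n)*N) ≤ s * w x := by
    intro s hs
    have hev : ∀ ε ∈ Set.Ioi (0:ℝ), -((N+ε)*R^2/(2*n)) ≤ s * w x := by
      intro ε hε
      have h := key s hs ε hε x hx
      have hβle : (-(N+ε)/(2*n)) * ‖x-c‖^2 ≤ 0 := by
        apply mul_nonpos_of_nonpos_of_nonneg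
        · apply div_nonpos_of_nonpos_of_nonneg
          · have hε' : (0:ℝ) < ε := hε
            linarith
          · linarith
        · positivity
      linarith
    have htend : Filter.Tendsto (fun ε : ℝ => -((N+ε)*R^2/(2*n)))
        (nhdsWithin 0 (Set.Ioi 0)) (nhds (-(R^2/(2*n)*N))) := by
      have hc : Continuous fun ε : ℝ => -((N+ε)*R^2/(2*n)) := by fun_prop
      have := hc.tendsto 0
      have heq : -((N+(0:ℝ))*R^2/(2*n)) = -(R^2/(2*n)*N) := by ring
      rw [heq] at this
      exact this.mono_left nhdsWithin_le_nhds
    exact le_of_tendsto htend (eventually_nhdsWithin_of_forall hev)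
  rw [abs_le]
  constructor
  · have := hbound 1 (by norm_num)
    linarith
  · have := hbound (-1) (by norm_num)
    linarith

end Poisson


/-- contraction property of the operator `A`: if `f` is
`(L₁,L₂,L₃)`-Lipschitz on `D_M`, `‖φ₁‖, ‖φ₂‖ ≤ M` and `uᵢ` are the classical solutions of
`Δ³uᵢ = φᵢ` with homogeneous boundary conditions, then
`max_{x∈Ω̄} |f(x,u₂,Δu₂,Δ²u₂) − f(x,u₁,Δu₁,Δ²u₁)| ≤ q·‖φ₂ − φ₁‖` with
`q = (C_Ω²L₁ + C_ΩL₂ + L₃)·C_Ω`. -/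
theorem statement6 {n : ℕ} (hn : 2 ≤ n)
    (Ω : Set (EuclideanSpace ℝ (Fin n))) (hΩopen : IsOpen Ω) (hΩconn : IsConnected Ω)
    (R : ℝ) (c : EuclideanSpace ℝ (Fin n)) (hball : Ω ⊆ Metric.closedBall c R)
    (CΩ : ℝ) (hCΩ : CΩ = R ^ 2 / (2 * n))
    (f : EuclideanSpace ℝ (Fin n) → ℝ → ℝ → ℝ → ℝ)
    (hf : ContinuousOn (fun p : EuclideanSpace ℝ (Fin n) × ℝ × ℝ × ℝ =>
      f p.1 p.2.1 p.2.2.1 p.2.2.2)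
      ((closure Ω) ×ˢ (Set.univ : Set (ℝ × ℝ × ℝ))))
    (M L1 L2 L3 : ℝ) (hM : 0 < M) (hL1 : 0 ≤ L1) (hL2 : 0 ≤ L2) (hL3 : 0 ≤ L3)
    -- Lipschitz condition on `D_M`
    (hlip : ∀ x ∈ Ω, ∀ u₁ v₁ w₁ u₂ v₂ w₂ : ℝ,
      |u₁| ≤ CΩ ^ 3 * M → |v₁| ≤ CΩ ^ 2 * M → |w₁| ≤ CΩ * M →
      |u₂| ≤ CΩ ^ 3 * M → |v₂| ≤ CΩ ^ 2 * M → |w₂| ≤ CΩ * M →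
      |f x u₂ v₂ w₂ - f x u₁ v₁ w₁| ≤ L1 * |u₂ - u₁| + L2 * |v₂ - v₁| + L3 * |w₂ - w₁|)
    (φ₁ φ₂ u₁ u₂ : EuclideanSpace ℝ (Fin n) → ℝ)
    (hφ₁ : ContinuousOn φ₁ (closure Ω)) (hφ₂ : ContinuousOn φ₂ (closure Ω))
    (hφ₁M : ∀ x ∈ closure Ω, |φ₁ x| ≤ M) (hφ₂M : ∀ x ∈ closure Ω, |φ₂ x| ≤ M)
    (hu₁ : IsClassicalTriharm Ω u₁ φ₁) (hu₂ : IsClassicalTriharm Ω u₂ φ₂) :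
    ∀ x ∈ closure Ω,
      |f x (u₂ x) (lap u₂ x) (lap (lap u₂) x) - f x (u₁ x) (lap u₁ x) (lap (lap u₁) x)|
        ≤ ((CΩ ^ 2 * L1 + CΩ * L2 + L3) * CΩ) *
          supNorm (closure Ω) (fun t => φ₂ t - φ₁ t) := by
  obtain ⟨hu₁c, hlu₁c, hllu₁c, hu₁d, hlu₁d, hllu₁d, hu₁eq, hu₁b⟩ := hu₁
  obtain ⟨hu₂c, hlu₂c, hllu₂c, hu₂d, hlu₂d, hllu₂d, hu₂eq, hu₂b⟩ := hu₂
  have hne : Ω.Nonempty := hΩconn.nonempty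
  have hn1 : 1 ≤ n := le_trans (by norm_num) hn
  have hM' : (0:ℝ) ≤ M := le_of_lt hM
  have hR : (0:ℝ) ≤ R := by
    obtain ⟨x₀, hx₀⟩ := hne
    have h := hball hx₀
    rw [Metric.mem_closedBall] at h
    linarith [dist_nonneg (x := x₀) (y := c)]
  have hCΩ0 : (0:ℝ) ≤ CΩ := by
    rw [hCΩ]; positivity
  have hclne : (closure Ω).Nonempty := hne.mono subset_closure
  have hsubset : closure Ω ⊆ Metric.closedBall c R :=
    closure_minimal hball Metric.isClosed_closedBall
  have hcompact : IsCompact (closure Ω) :=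
    (isCompact_closedBall c R).of_isClosed_subset isClosed_closure hsubset
  set ψ : EuclideanSpace ℝ (Fin n) → ℝ := fun t => φ₂ t - φ₁ t with hψdef
  have hψc : ContinuousOn ψ (closure Ω) := hφ₂.sub hφ₁
  set N : ℝ := supNorm (closure Ω) ψ with hNdef
  have hbdd : BddAbove ((fun x => |ψ x|) '' (closure Ω)) :=
    (hcompact.image_of_continuousOn hψc.abs).bddAbove
  have hNle : ∀ x ∈ closure Ω, |ψ x| ≤ N :=
    fun x hx => le_csSup hbdd ⟨x, hx, rfl⟩
  have hN0 : (0:ℝ) ≤ N := by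
    obtain ⟨x₀, hx₀⟩ := hclne
    exact le_trans (abs_nonneg _) (hNle x₀ hx₀)
  have hCN : R^2/(2*(n:ℝ)) * N = CΩ * N := by rw [hCΩ]
  have hCM : R^2/(2*(n:ℝ)) * M = CΩ * M := by rw [hCΩ]
  -- estimates for differences
  have hA2 : ∀ x ∈ closure Ω, |lap (lap u₂) x - lap (lap u₁) x| ≤ CΩ * N := by
    intro x hx
    rw [← hCN]
    refine poisson_bound_aux hn1 hΩopen hne hball (hllu₂c.fun_sub hllu₁c)
      (hllu₂d.sub hllu₁d) ?_ hN0 ?_ x hx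
    · intro y hy
      rw [(hu₂b y hy).2.2, (hu₁b y hy).2.2]; ring
    · intro y hy
      rw [lap_sub_aux hΩopen hllu₂d hllu₁d hy, hu₂eq y hy, hu₁eq y hy]
      exact hNle y (subset_closure hy)
  have hA1 : ∀ x ∈ closure Ω, |lap u₂ x - lap u₁ x| ≤ CΩ * (CΩ * N) := by
    intro x hx
    rw [← show R^2/(2*(n:ℝ)) * (CΩ * N) = CΩ * (CΩ * N) by rw [hCΩ]]
    refine poisson_bound_aux hn1 hΩopen hne hball (hlu₂c.fun_sub hlu₁c)
      (hlu₂d.sub hlu₁d) ?_ (by positivity) ?_ x hx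
    · intro y hy
      rw [(hu₂b y hy).2.1, (hu₁b y hy).2.1]; ring
    · intro y hy
      rw [lap_sub_aux hΩopen hlu₂d hlu₁d hy]
      exact hA2 y (subset_closure hy)
  have hA0 : ∀ x ∈ closure Ω, |u₂ x - u₁ x| ≤ CΩ * (CΩ * (CΩ * N)) := by
    intro x hx
    rw [← show R^2/(2*(n:ℝ)) * (CΩ * (CΩ * N)) = CΩ * (CΩ * (CΩ * N)) by rw [hCΩ]]
    refine poisson_bound_aux hn1 hΩopen hne hball (hu₂c.fun_sub hu₁c)
      (hu₂d.sub hu₁d) ?_ (by positivity) ?_ x hx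
    · intro y hy
      rw [(hu₂b y hy).1, (hu₁b y hy).1]; ring
    · intro y hy
      rw [lap_sub_aux hΩopen hu₂d hu₁d hy]
      exact hA1 y (subset_closure hy)
  -- individual bounds
  have hB2 : ∀ (u φ : EuclideanSpace ℝ (Fin n) → ℝ),
      IsClassicalTriharm Ω u φ → (∀ x ∈ closure Ω, |φ x| ≤ M) →
      (∀ x ∈ closure Ω, |lap (lap u) x| ≤ CΩ * M) ∧
      (∀ x ∈ closure Ω, |lap u x| ≤ CΩ * (CΩ * M)) ∧
      (∀ x ∈ closure Ω, |u x| ≤ CΩ * (CΩ * (CΩ * M))) := by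
    intro u φ hu hφM
    obtain ⟨huc, hluc, hlluc, hud, hlud, hllud, hueq, hub⟩ := hu
    have h2 : ∀ x ∈ closure Ω, |lap (lap u) x| ≤ CΩ * M := by
      intro x hx
      rw [← hCM]
      refine poisson_bound_aux hn1 hΩopen hne hball hlluc hllud
        (fun y hy => (hub y hy).2.2) hM' ?_ x hx
      intro y hy
      rw [hueq y hy]
      exact hφM y (subset_closure hy)
    have h1 : ∀ x ∈ closure Ω, |lap u x| ≤ CΩ * (CΩ * M) := by
      intro x hx
      rw [← show R^2/(2*(n:ℝ)) * (CΩ * M) = CΩ * (CΩ * M) by rw [hCΩ]]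
      refine poisson_bound_aux hn1 hΩopen hne hball hluc hlud
        (fun y hy => (hub y hy).2.1) (by positivity) ?_ x hx
      intro y hy
      exact h2 y (subset_closure hy)
    have h0 : ∀ x ∈ closure Ω, |u x| ≤ CΩ * (CΩ * (CΩ * M)) := by
      intro x hx
      rw [← show R^2/(2*(n:ℝ)) * (CΩ * (CΩ * M)) = CΩ * (CΩ * (CΩ * M)) by rw [hCΩ]]
      refine poisson_bound_aux hn1 hΩopen hne hball huc hud
        (fun y hy => (hub y hy).1) (by positivity) ?_ x hx
      intro y hy
      exact h1 y (subset_closure hy)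
    exact ⟨h2, h1, h0⟩
  obtain ⟨h12, h11, h10⟩ := hB2 u₁ φ₁
    ⟨hu₁c, hlu₁c, hllu₁c, hu₁d, hlu₁d, hllu₁d, hu₁eq, hu₁b⟩ hφ₁M
  obtain ⟨h22, h21, h20⟩ := hB2 u₂ φ₂
    ⟨hu₂c, hlu₂c, hllu₂c, hu₂d, hlu₂d, hllu₂d, hu₂eq, hu₂b⟩ hφ₂M
  -- pointwise bound on Ω
  have hΩbound : ∀ x ∈ Ω,
      |f x (u₂ x) (lap u₂ x) (lap (lap u₂) x) - f x (u₁ x) (lap u₁ x) (lap (lap u₁) x)|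
        ≤ ((CΩ ^ 2 * L1 + CΩ * L2 + L3) * CΩ) * N := by
    intro x hx
    have hxcl : x ∈ closure Ω := subset_closure hx
    have hcube : CΩ * (CΩ * (CΩ * M)) = CΩ^3 * M := by ring
    have hsq : CΩ * (CΩ * M) = CΩ^2 * M := by ring
    have h := hlip x hx (u₁ x) (lap u₁ x) (lap (lap u₁) x)
      (u₂ x) (lap u₂ x) (lap (lap u₂) x)
      (by rw [← hcube]; exact h10 x hxcl)
      (by rw [← hsq]; exact h11 x hxcl)
      (h12 x hxcl)
      (by rw [← hcube]; exact h20 x hxcl)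
      (by rw [← hsq]; exact h21 x hxcl)
      (h22 x hxcl)
    refine le_trans h ?_
    have e0 := hA0 x hxcl
    have e1 := hA1 x hxcl
    have e2 := hA2 x hxcl
    have hb0 : L1 * |u₂ x - u₁ x| ≤ L1 * (CΩ * (CΩ * (CΩ * N))) :=
      mul_le_mul_of_nonneg_left e0 hL1
    have hb1 : L2 * |lap u₂ x - lap u₁ x| ≤ L2 * (CΩ * (CΩ * N)) :=
      mul_le_mul_of_nonneg_left e1 hL2
    have hb2 : L3 * |lap (lap u₂) x - lap (lap u₁) x| ≤ L3 * (CΩ * N) :=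
      mul_le_mul_of_nonneg_left e2 hL3
    have : ((CΩ ^ 2 * L1 + CΩ * L2 + L3) * CΩ) * N
        = L1 * (CΩ * (CΩ * (CΩ * N))) + L2 * (CΩ * (CΩ * N)) + L3 * (CΩ * N) := by
      ring
    rw [this]
    linarith
  -- extend to the closure by continuity
  intro x hx
  have hg2 : ContinuousOn
      (fun x => f x (u₂ x) (lap u₂ x) (lap (lap u₂) x)) (closure Ω) := by
    refine hf.comp (continuousOn_id.prodMk (hu₂c.prodMk (hlu₂c.prodMk hllu₂c))) ?_
    intro y hy
    exact ⟨hy, trivial⟩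
  have hg1 : ContinuousOn
      (fun x => f x (u₁ x) (lap u₁ x) (lap (lap u₁) x)) (closure Ω) := by
    refine hf.comp (continuousOn_id.prodMk (hu₁c.prodMk (hlu₁c.prodMk hllu₁c))) ?_
    intro y hy
    exact ⟨hy, trivial⟩
  have hgc : ContinuousOn (fun x =>
      |f x (u₂ x) (lap u₂ x) (lap (lap u₂) x)
        - f x (u₁ x) (lap u₁ x) (lap (lap u₁) x)|) (closure Ω) := (hg2.sub hg1).abs
  haveI : (nhdsWithin x Ω).NeBot := mem_closure_iff_nhdsWithin_neBot.mp hx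
  have htends := ((hgc x hx).mono_left (nhdsWithin_mono x subset_closure))
  exact le_of_tendsto htends (eventually_nhdsWithin_of_forall hΩbound)
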